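/- Let D be a three-dimensional Ferrers diagram. Then the Krull dimension of the special fiber ring F(I_D) = K[x_i y_j z_k : (i,j,k) ∈ D] equals a_D + b_D + c_D − 2, where a_D, b_D, c_D are the numbers of distinct first, second, and third coordinates appearing in D. -/

import Mathlib

open MvPolynomial

/-- A lattice point of `ℤ₊³`, modeled as a triple of natural numbers. -/
abbrev Pt : Type := ℕ × ℕ × ℕ

/-- The toric map sending `T_{(i,j,k)} ↦ x_i y_j z_k`, where the `x`, `y`, `z`
variables are modeled as the variables `(0,·)`, `(1,·)`, `(2,·)` of a polynomial
ring indexed by `Fin 3 × ℕ`. -/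
noncomputable def toricMap (K : Type*) [Field K] :
    MvPolynomial Pt K →ₐ[K] MvPolynomial (Fin 3 × ℕ) K :=
  aeval fun v => X (0, v.1) * X (1, v.2.1) * X (2, v.2.2)

/-- A three-dimensional Ferrers diagram: a finite downward-closed set of points with
coordinates at least `1`. -/
def IsFerrers (D : Finset Pt) : Prop :=
  ∀ v ∈ D, 1 ≤ v.1 ∧ 1 ≤ v.2.1 ∧ 1 ≤ v.2.2 ∧
    ∀ i j k : ℕ, 1 ≤ i → i ≤ v.1 → 1 ≤ j → j ≤ v.2.1 → 1 ≤ k → k ≤ v.2.2 → (i, j, k) ∈ D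

/-- The projection property of a three-dimensional Ferrers diagram. -/
def ProjProp (D : Finset Pt) : Prop :=
  ∀ i j₁ k₁ j₂ k₂ : ℕ, 2 ≤ i → (i, j₁, k₁) ∈ D → (i, j₂, k₂) ∈ D → (i - 1, j₁, k₂) ∈ D

/-- `{a, b}` is obtained from `{u, v}` by switching exactly one of the three
coordinates. -/
def IsSwitch (u v a b : Pt) : Prop :=
  (a = (v.1, u.2.1, u.2.2) ∧ b = (u.1, v.2.1, v.2.2)) ∨
  (a = (u.1, v.2.1, u.2.2) ∧ b = (v.1, u.2.1, v.2.2)) ∨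
  (a = (u.1, u.2.1, v.2.2) ∧ b = (v.1, v.2.1, u.2.2))

/-- The 2-minors ideal `I₂(D)` of a diagram, in the polynomial ring with variables
indexed by all lattice points. -/
noncomputable def I2full (K : Type*) [Field K] (D : Finset Pt) : Ideal (MvPolynomial Pt K) :=
  Ideal.span {f | ∃ u v a b : Pt, u ∈ D ∧ v ∈ D ∧ a ∈ D ∧ b ∈ D ∧ IsSwitch u v a b ∧
    f = X u * X v - X a * X b}


set_option linter.unusedSectionVars false
set_option maxHeartbeats 1000000
open Finset
open scoped Classical

section Sec1




lemma downset_eq_Icc (S : Finset ℕ) (hne : S.Nonempty) (h1 : ∀ s ∈ S, 1 ≤ s)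
    (hdc : ∀ s ∈ S, ∀ t, 1 ≤ t → t ≤ s → t ∈ S) : S = Finset.Icc 1 S.card := by
  have hM := S.max'_mem hne
  have hIcc : S = Finset.Icc 1 (S.max' hne) := by
    ext t
    simp only [Finset.mem_Icc]
    exact ⟨fun ht => ⟨h1 t ht, S.le_max' t ht⟩,
      fun ht => hdc _ hM t ht.1 ht.2⟩
  have hcard : S.card = S.max' hne := by
    conv_lhs => rw [hIcc]
    simp [Nat.card_Icc]
  rw [hcard]; exact hIcc

section Ferrers
variable {D : Finset Pt} (hD : IsFerrers D) (hne : D.Nonempty)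

/-- abbreviations for the three cardinalities -/
noncomputable def aD (D : Finset Pt) : ℕ := (D.image Prod.fst).card
noncomputable def bD (D : Finset Pt) : ℕ := (D.image fun v => v.2.1).card
noncomputable def cD (D : Finset Pt) : ℕ := (D.image fun v => v.2.2).card

include hD hne

lemma image_fst_eq : D.image Prod.fst = Finset.Icc 1 (aD D) := by
  apply downset_eq_Icc
  · exact hne.image _
  · intro s hs
    obtain ⟨v, hv, rfl⟩ := Finset.mem_image.mp hs
    exact (hD v hv).1
  · intro s hs t h1t hts
    obtain ⟨v, hv, rfl⟩ := Finset.mem_image.mp hs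
    obtain ⟨hv1, hv2, hv3, hcl⟩ := hD v hv
    exact Finset.mem_image.mpr ⟨(t, 1, 1), hcl t 1 1 h1t hts le_rfl hv2 le_rfl hv3, rfl⟩

lemma image_snd_eq : D.image (fun v => v.2.1) = Finset.Icc 1 (bD D) := by
  apply downset_eq_Icc
  · exact hne.image _
  · intro s hs
    obtain ⟨v, hv, rfl⟩ := Finset.mem_image.mp hs
    exact (hD v hv).2.1
  · intro s hs t h1t hts
    obtain ⟨v, hv, rfl⟩ := Finset.mem_image.mp hs
    obtain ⟨hv1, hv2, hv3, hcl⟩ := hD v hv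
    exact Finset.mem_image.mpr ⟨(1, t, 1), hcl 1 t 1 le_rfl hv1 h1t hts le_rfl hv3, rfl⟩

lemma image_trd_eq : D.image (fun v => v.2.2) = Finset.Icc 1 (cD D) := by
  apply downset_eq_Icc
  · exact hne.image _
  · intro s hs
    obtain ⟨v, hv, rfl⟩ := Finset.mem_image.mp hs
    exact (hD v hv).2.2.1
  · intro s hs t h1t hts
    obtain ⟨v, hv, rfl⟩ := Finset.mem_image.mp hs
    obtain ⟨hv1, hv2, hv3, hcl⟩ := hD v hv
    exact Finset.mem_image.mpr ⟨(1, 1, t), hcl 1 1 t le_rfl hv1 le_rfl hv2 h1t hts, rfl⟩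

lemma aD_pos : 1 ≤ aD D := Finset.card_pos.mpr (hne.image _)
lemma bD_pos : 1 ≤ bD D := Finset.card_pos.mpr (hne.image _)
lemma cD_pos : 1 ≤ cD D := Finset.card_pos.mpr (hne.image _)

lemma mem_D_x {i : ℕ} (h1 : 1 ≤ i) (h2 : i ≤ aD D) : ((i, 1, 1) : Pt) ∈ D := by
  have : (aD D) ∈ D.image Prod.fst := by
    rw [image_fst_eq hD hne]; exact Finset.mem_Icc.mpr ⟨aD_pos hD hne, le_rfl⟩
  obtain ⟨v, hv, hv1⟩ := Finset.mem_image.mp this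
  obtain ⟨_, hv2, hv3, hcl⟩ := hD v hv
  exact hcl i 1 1 h1 (hv1 ▸ h2) le_rfl hv2 le_rfl hv3

lemma mem_D_y {j : ℕ} (h1 : 1 ≤ j) (h2 : j ≤ bD D) : ((1, j, 1) : Pt) ∈ D := by
  have : (bD D) ∈ D.image (fun v => v.2.1) := by
    rw [image_snd_eq hD hne]; exact Finset.mem_Icc.mpr ⟨bD_pos hD hne, le_rfl⟩
  obtain ⟨v, hv, hv1⟩ := Finset.mem_image.mp this
  obtain ⟨hv1', _, hv3, hcl⟩ := hD v hv
  exact hcl 1 j 1 le_rfl hv1' h1 (hv1 ▸ h2) le_rfl hv3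

lemma mem_D_z {k : ℕ} (h1 : 1 ≤ k) (h2 : k ≤ cD D) : ((1, 1, k) : Pt) ∈ D := by
  have : (cD D) ∈ D.image (fun v => v.2.2) := by
    rw [image_trd_eq hD hne]; exact Finset.mem_Icc.mpr ⟨cD_pos hD hne, le_rfl⟩
  obtain ⟨v, hv, hv1⟩ := Finset.mem_image.mp this
  obtain ⟨hv1', hv2, _, hcl⟩ := hD v hv
  exact hcl 1 1 k le_rfl hv1' le_rfl hv2 h1 (hv1 ▸ h2)

lemma fst_le {v : Pt} (hv : v ∈ D) : v.1 ≤ aD D := by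
  have : v.1 ∈ D.image Prod.fst := Finset.mem_image.mpr ⟨v, hv, rfl⟩
  rw [image_fst_eq hD hne] at this
  exact (Finset.mem_Icc.mp this).2

lemma snd_le {v : Pt} (hv : v ∈ D) : v.2.1 ≤ bD D := by
  have : v.2.1 ∈ D.image (fun v => v.2.1) := Finset.mem_image.mpr ⟨v, hv, rfl⟩
  rw [image_snd_eq hD hne] at this
  exact (Finset.mem_Icc.mp this).2

lemma trd_le {v : Pt} (hv : v ∈ D) : v.2.2 ≤ cD D := by
  have : v.2.2 ∈ D.image (fun v => v.2.2) := Finset.mem_image.mpr ⟨v, hv, rfl⟩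
  rw [image_trd_eq hD hne] at this
  exact (Finset.mem_Icc.mp this).2

end Ferrers

end Sec1

section Sec2

variable {K : Type*} [Field K] {σ : Type*}

noncomputable def phiS (K : Type*) [Field K] {σ : Type*} (S : Set σ) :
    MvPolynomial σ K →ₐ[K] MvPolynomial σ K :=
  aeval (fun w => if w ∈ S then 0 else X w)

noncomputable def QS (K : Type*) [Field K] {σ : Type*} (S : Set σ) : Ideal (MvPolynomial σ K) :=
  Ideal.span (X '' S)

lemma QS_mono {S T : Set σ} (h : S ⊆ T) : QS K S ≤ QS K T :=
  Ideal.span_mono (Set.image_mono h)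

lemma X_mem_QS {S : Set σ} {w : σ} (h : w ∈ S) : (X w : MvPolynomial σ K) ∈ QS K S :=
  Ideal.subset_span ⟨w, h, rfl⟩

lemma sub_phiS_mem (S : Set σ) (f : MvPolynomial σ K) : f - phiS K S f ∈ QS K S := by
  induction f using MvPolynomial.induction_on with
  | C a => simp [phiS]
  | add p q hp hq =>
    have : p + q - phiS K S (p + q) = (p - phiS K S p) + (q - phiS K S q) := by
      rw [map_add]; ring
    rw [this]; exact Ideal.add_mem _ hp hq
  | mul_X p w hp =>
    by_cases hw : w ∈ S
    · have h1 : (X w : MvPolynomial σ K) ∈ QS K S := X_mem_QS hw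
      have : phiS K S (p * X w) = 0 := by
        rw [map_mul]
        simp [phiS, hw]
      rw [this, sub_zero]
      exact Ideal.mul_mem_left _ p h1
    · have : phiS K S (p * X w) = phiS K S p * X w := by
        rw [map_mul]
        simp [phiS, hw]
      rw [this]
      have : p * X w - phiS K S p * X w = (p - phiS K S p) * X w := by ring
      rw [this]
      exact Ideal.mul_mem_right _ _ hp

lemma QS_eq_ker (S : Set σ) : QS K S = RingHom.ker (phiS K S).toRingHom := by
  apply le_antisymm
  · rw [QS, Ideal.span_le]
    rintro f ⟨w, hw, rfl⟩
    simp [RingHom.mem_ker, phiS, hw]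
  · intro f hf
    rw [RingHom.mem_ker] at hf
    have h2 := sub_phiS_mem S f
    have h3 : phiS K S f = 0 := hf
    rwa [h3, sub_zero] at h2

lemma QS_isPrime (S : Set σ) : (QS K S).IsPrime := by
  rw [QS_eq_ker]
  exact RingHom.ker_isPrime _

lemma triple_X_not_mem_QS {S : Set σ} {u v w : σ}
    (hu : u ∉ S) (hv : v ∉ S) (hw : w ∉ S) :
    (X u * X v * X w : MvPolynomial σ K) ∉ QS K S := by
  rw [QS_eq_ker, RingHom.mem_ker]
  have : (phiS K S).toRingHom (X u * X v * X w) = X u * X v * X w := by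
    show phiS K S (X u * X v * X w) = _
    rw [map_mul, map_mul]
    simp [phiS, hu, hv, hw]
  rw [this]
  exact mul_ne_zero (mul_ne_zero (X_ne_zero u) (X_ne_zero v)) (X_ne_zero w)

end Sec2

section Sec3

variable {A : Type*} [CommRing A]

lemma cl_aux (ℓ : ℕ) (q : ℕ → Ideal A) (hq : ∀ t, t ≤ ℓ → (q t).IsPrime)
    (hmono : ∀ t, t < ℓ → q t ≤ q (t + 1)) (Y a : ℕ → A) (Al : ℕ → ℕ)
    (hY1 : ∀ t, t < ℓ → Y t ∈ q (t + 1)) (hY0 : ∀ t, t < ℓ → Y t ∉ q t) :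
    ∀ k t, t + k = ℓ →
      (∏ i ∈ Finset.Ico t ℓ, Y i ^ Al i) -
        (∑ j ∈ Finset.Ico t ℓ, a j * ((∏ i ∈ Finset.Ico t j, Y i ^ Al i) * Y j ^ (Al j + 1)))
        ∈ q t → False := by
  intro k
  induction k with
  | zero =>
    intro t ht h
    have hteq : ℓ = t := by omega
    subst hteq
    simp only [Finset.Ico_self, Finset.prod_empty, Finset.sum_empty, sub_zero] at h
    exact (hq _ le_rfl).ne_top (Ideal.eq_top_of_isUnit_mem _ h isUnit_one)
  | succ k ih =>
    intro t ht h
    have htl : t < ℓ := by omega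
    set W : A := ((∏ i ∈ Finset.Ico (t+1) ℓ, Y i ^ Al i) -
        (∑ j ∈ Finset.Ico (t+1) ℓ, a j * ((∏ i ∈ Finset.Ico (t+1) j, Y i ^ Al i)
          * Y j ^ (Al j + 1)))) - a t * Y t with hW
    have key : (∏ i ∈ Finset.Ico t ℓ, Y i ^ Al i) -
        (∑ j ∈ Finset.Ico t ℓ, a j * ((∏ i ∈ Finset.Ico t j, Y i ^ Al i) * Y j ^ (Al j + 1)))
        = Y t ^ Al t * W := by
      rw [Finset.prod_eq_prod_Ico_succ_bot htl]
      rw [Finset.sum_eq_sum_Ico_succ_bot htl]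
      have hsum : ∑ j ∈ Finset.Ico (t+1) ℓ, a j * ((∏ i ∈ Finset.Ico t j, Y i ^ Al i)
            * Y j ^ (Al j + 1))
          = Y t ^ Al t * ∑ j ∈ Finset.Ico (t+1) ℓ, a j * ((∏ i ∈ Finset.Ico (t+1) j, Y i ^ Al i)
            * Y j ^ (Al j + 1)) := by
        rw [Finset.mul_sum]
        apply Finset.sum_congr rfl
        intro j hj
        have htj : t < j := (Finset.mem_Ico.mp hj).1
        rw [Finset.prod_eq_prod_Ico_succ_bot htj]
        ring
      rw [hsum]
      simp only [Finset.Ico_self, Finset.prod_empty, one_mul]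
      rw [hW]
      ring
    rw [key] at h
    have hprime := hq t (le_of_lt htl)
    rcases hprime.mem_or_mem h with hcase | hcase
    · exact hY0 t htl (hprime.mem_of_pow_mem _ hcase)
    · apply ih (t + 1) (by omega)
      have : (∏ i ∈ Finset.Ico (t+1) ℓ, Y i ^ Al i) -
          (∑ j ∈ Finset.Ico (t+1) ℓ, a j * ((∏ i ∈ Finset.Ico (t+1) j, Y i ^ Al i)
            * Y j ^ (Al j + 1))) = W + a t * Y t := by rw [hW]; ring
      rw [this]
      exact Ideal.add_mem _ (hmono t htl hcase) (Ideal.mul_mem_left _ _ (hY1 t htl))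

lemma cl_descent (ℓ : ℕ) (q : ℕ → Ideal A) (hq : ∀ t, t ≤ ℓ → (q t).IsPrime)
    (hmono : ∀ t, t < ℓ → q t ≤ q (t + 1)) (Y a : ℕ → A) (Al : ℕ → ℕ)
    (hY1 : ∀ t, t < ℓ → Y t ∈ q (t + 1)) (hY0 : ∀ t, t < ℓ → Y t ∉ q t)
    (heq : (∏ i ∈ Finset.range ℓ, Y i ^ Al i) =
      ∑ j ∈ Finset.range ℓ, a j * ((∏ i ∈ Finset.range j, Y i ^ Al i) * Y j ^ (Al j + 1))) :
    False := by
  apply cl_aux ℓ q hq hmono Y a Al hY1 hY0 ℓ 0 (by omega)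
  simp only [← Finset.range_eq_Ico]
  rw [heq, sub_self]
  exact Ideal.zero_mem _

end Sec3

section Sec4

variable {K : Type*} [Field K] {A : Type*} [CommRing A] [Algebra K A]

lemma annihilator_gives_equation (ℓ : ℕ) (Y : ℕ → A) (Q : MvPolynomial (Fin ℓ) K)
    (hQ : Q ≠ 0) (h0 : aeval (fun i : Fin ℓ => Y i) Q = 0) :
    ∃ (Al : ℕ → ℕ) (a : ℕ → A),
      (∏ i ∈ Finset.range ℓ, Y i ^ Al i) =
        ∑ j ∈ Finset.range ℓ, a j * ((∏ i ∈ Finset.range j, Y i ^ Al i) * Y j ^ (Al j + 1)) := by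
  classical
  have hsupp : Q.support.Nonempty := MvPolynomial.support_nonempty.mpr hQ
  -- lex-minimal exponent
  let T : Finset (Lex (Fin ℓ →₀ ℕ)) := Q.support.image toLex
  have hT : T.Nonempty := hsupp.image _
  set αL : Lex (Fin ℓ →₀ ℕ) := T.min' hT with hαL
  set α : Fin ℓ →₀ ℕ := ofLex αL with hα
  have hαmem : α ∈ Q.support := by
    obtain ⟨β, hβ, hβe⟩ := Finset.mem_image.mp (T.min'_mem hT)
    have h1 : ofLex (T.min' hT) = β := by rw [← hβe]; rfl
    rw [hα, hαL, h1]
    exact hβ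
  have hαmin : ∀ β ∈ Q.support, β ≠ α → ∃ j : Fin ℓ,
      (∀ i : Fin ℓ, i < j → α i = β i) ∧ α j < β j := by
    intro β hβ hne
    have h1 : αL ≤ toLex β := T.min'_le _ (Finset.mem_image_of_mem _ hβ)
    have h2 : αL < toLex β := lt_of_le_of_ne h1 (by
      intro hc
      exact hne (show β = α by rw [hα, hc]; rfl))
    have h3 := Finsupp.Lex.lt_iff.mp h2
    obtain ⟨j, hj1, hj2⟩ := h3
    exact ⟨j, fun i hi => hj1 i hi, hj2⟩
  -- extensions to ℕ
  set Al : ℕ → ℕ := fun i => if h : i < ℓ then α ⟨i, h⟩ else 0 with hAl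
  have hAl_eq : ∀ i : Fin ℓ, Al i = α i := by
    intro i; simp only [hAl, i.isLt, dif_pos, Fin.eta]
  -- the generators
  set G : Fin ℓ → A := fun j =>
    (∏ i ∈ Finset.range (j : ℕ), Y i ^ Al i) * Y (j : ℕ) ^ (Al (j : ℕ) + 1) with hG
  -- each non-minimal monomial is in the span of the G's
  have claim1 : ∀ β ∈ Q.support, β ≠ α →
      (∏ i : Fin ℓ, Y (i : ℕ) ^ β i) ∈ Ideal.span (Set.range G) := by
    intro β hβ hne
    obtain ⟨j, hj1, hj2⟩ := hαmin β hβ hne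
    set Bl : ℕ → ℕ := fun i => if h : i < ℓ then β ⟨i, h⟩ else 0 with hBl
    have hBl_eq : ∀ i : Fin ℓ, Bl i = β i := by
      intro i; simp only [hBl, i.isLt, dif_pos, Fin.eta]
    have hjl : (j : ℕ) < ℓ := j.isLt
    have step1 : (∏ i : Fin ℓ, Y (i : ℕ) ^ β i) = ∏ i ∈ Finset.range ℓ, Y i ^ Bl i := by
      rw [← Fin.prod_univ_eq_prod_range (fun i => Y i ^ Bl i) ℓ]
      exact Finset.prod_congr rfl (fun i _ => by rw [hBl_eq i])
    have step2 : (∏ i ∈ Finset.range ℓ, Y i ^ Bl i) =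
        (∏ i ∈ Finset.range (j : ℕ), Y i ^ Bl i) * ∏ i ∈ Finset.Ico (j : ℕ) ℓ, Y i ^ Bl i :=
      (Finset.prod_range_mul_prod_Ico _ (le_of_lt hjl)).symm
    have step3 : (∏ i ∈ Finset.Ico (j : ℕ) ℓ, Y i ^ Bl i) =
        Y (j : ℕ) ^ Bl (j : ℕ) * ∏ i ∈ Finset.Ico ((j : ℕ) + 1) ℓ, Y i ^ Bl i :=
      Finset.prod_eq_prod_Ico_succ_bot hjl _
    have step4 : (∏ i ∈ Finset.range (j : ℕ), Y i ^ Bl i) =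
        ∏ i ∈ Finset.range (j : ℕ), Y i ^ Al i := by
      apply Finset.prod_congr rfl
      intro i hi
      have hiℓ : i < ℓ := lt_trans (Finset.mem_range.mp hi) hjl
      have : α ⟨i, hiℓ⟩ = β ⟨i, hiℓ⟩ := hj1 ⟨i, hiℓ⟩ (by
        rw [Fin.lt_def]; exact Finset.mem_range.mp hi)
      simp only [hBl, hAl, hiℓ, dif_pos, this]
    have hpow : Al (j : ℕ) < Bl (j : ℕ) := by
      rw [hAl_eq j, hBl_eq j]; exact hj2
    have step5 : Y (j : ℕ) ^ Bl (j : ℕ) =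
        Y (j : ℕ) ^ (Al (j : ℕ) + 1) * Y (j : ℕ) ^ (Bl (j : ℕ) - (Al (j : ℕ) + 1)) := by
      rw [← pow_add]
      congr 1
      omega
    have : (∏ i : Fin ℓ, Y (i : ℕ) ^ β i) = G j *
        (Y (j : ℕ) ^ (Bl (j : ℕ) - (Al (j : ℕ) + 1)) *
          ∏ i ∈ Finset.Ico ((j : ℕ) + 1) ℓ, Y i ^ Bl i) := by
      rw [step1, step2, step3, step4, step5, hG]
      ring
    rw [this]
    exact Ideal.mul_mem_right _ _ (Ideal.subset_span ⟨j, rfl⟩)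
  -- the minimal monomial is in the span as well
  have claim2 : (∏ i : Fin ℓ, Y (i : ℕ) ^ α i) ∈ Ideal.span (Set.range G) := by
    have hev : (0 : A) = ∑ d ∈ Q.support,
        algebraMap K A (coeff d Q) * ∏ i : Fin ℓ, Y (i : ℕ) ^ d i := by
      rw [← h0, aeval_def, eval₂_eq']
    have hsplit : ∑ d ∈ Q.support.erase α,
          algebraMap K A (coeff d Q) * ∏ i : Fin ℓ, Y (i : ℕ) ^ d i
        + algebraMap K A (coeff α Q) * ∏ i : Fin ℓ, Y (i : ℕ) ^ α i
        = ∑ d ∈ Q.support, algebraMap K A (coeff d Q) * ∏ i : Fin ℓ, Y (i : ℕ) ^ d i :=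
      Finset.sum_erase_add _ _ hαmem
    have hcα : coeff α Q ≠ 0 := MvPolynomial.mem_support_iff.mp hαmem
    have key : (∏ i : Fin ℓ, Y (i : ℕ) ^ α i) =
        algebraMap K A (coeff α Q)⁻¹ *
          (- ∑ d ∈ Q.support.erase α,
            algebraMap K A (coeff d Q) * ∏ i : Fin ℓ, Y (i : ℕ) ^ d i) := by
      have h1 : algebraMap K A (coeff α Q) * ∏ i : Fin ℓ, Y (i : ℕ) ^ α i
          = - ∑ d ∈ Q.support.erase α,
            algebraMap K A (coeff d Q) * ∏ i : Fin ℓ, Y (i : ℕ) ^ d i := by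
        rw [← hev] at hsplit
        linear_combination hsplit
      calc (∏ i : Fin ℓ, Y (i : ℕ) ^ α i)
          = (algebraMap K A (coeff α Q)⁻¹ * algebraMap K A (coeff α Q)) *
            ∏ i : Fin ℓ, Y (i : ℕ) ^ α i := by
            rw [← map_mul, inv_mul_cancel₀ hcα, map_one, one_mul]
        _ = algebraMap K A (coeff α Q)⁻¹ *
            (algebraMap K A (coeff α Q) * ∏ i : Fin ℓ, Y (i : ℕ) ^ α i) := by ring
        _ = _ := by rw [h1]
    rw [key]
    apply Ideal.mul_mem_left
    apply neg_mem
    apply Ideal.sum_mem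
    intro d hd
    have hdmem : d ∈ Q.support := Finset.mem_of_mem_erase hd
    have hdne : d ≠ α := Finset.ne_of_mem_erase hd
    exact Ideal.mul_mem_left _ _ (claim1 d hdmem hdne)
  -- extract coefficients
  obtain ⟨a', ha'⟩ := Ideal.mem_span_range_iff_exists_fun.mp claim2
  set a : ℕ → A := fun j => if h : j < ℓ then a' ⟨j, h⟩ else 0 with ha
  refine ⟨Al, a, ?_⟩
  have lhs : (∏ i ∈ Finset.range ℓ, Y i ^ Al i) = ∏ i : Fin ℓ, Y (i : ℕ) ^ α i := by
    rw [← Fin.prod_univ_eq_prod_range (fun i => Y i ^ Al i) ℓ]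
    exact Finset.prod_congr rfl (fun i _ => by rw [hAl_eq i])
  have rhs : (∑ j ∈ Finset.range ℓ, a j * ((∏ i ∈ Finset.range j, Y i ^ Al i)
        * Y j ^ (Al j + 1)))
      = ∑ j : Fin ℓ, a' j * G j := by
    rw [← Fin.sum_univ_eq_sum_range
      (fun j => a j * ((∏ i ∈ Finset.range j, Y i ^ Al i) * Y j ^ (Al j + 1))) ℓ]
    apply Finset.sum_congr rfl
    intro j _
    have : a (j : ℕ) = a' j := by simp only [ha, j.isLt, dif_pos, Fin.eta]
    rw [this, hG]
  rw [lhs, rhs, ha']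

end Sec4


set_option synthInstance.maxHeartbeats 400000

section Sec5

variable {K : Type*} [Field K]

/-- coordinate sums -/
def sxm (a : ℕ) (m : (Fin 3 × ℕ) →₀ ℕ) : ℕ := ∑ i ∈ Finset.Icc 1 a, m (0, i)
def sym (b : ℕ) (m : (Fin 3 × ℕ) →₀ ℕ) : ℕ := ∑ j ∈ Finset.Icc 1 b, m (1, j)
def szm (c : ℕ) (m : (Fin 3 × ℕ) →₀ ℕ) : ℕ := ∑ k ∈ Finset.Icc 1 c, m (2, k)

def Vf (a b c : ℕ) : Finset (Fin 3 × ℕ) :=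
  ((Finset.Icc 1 a).image fun i => ((0 : Fin 3), i)) ∪
  ((Finset.Icc 1 b).image fun j => ((1 : Fin 3), j)) ∪
  ((Finset.Icc 1 c).image fun k => ((2 : Fin 3), k))

def Bal (a b c n : ℕ) : Set ((Fin 3 × ℕ) →₀ ℕ) :=
  {m | (∀ w ∈ m.support, w ∈ Vf a b c) ∧ sxm a m = sym b m ∧ sxm a m = szm c m ∧ sxm a m ≤ n}

noncomputable def WB (K : Type*) [Field K] (a b c n : ℕ) :
    Submodule K (MvPolynomial (Fin 3 × ℕ) K) :=
  Submodule.span K ((fun m => (monomial m (1 : K) : MvPolynomial (Fin 3 × ℕ) K)) '' Bal a b c n)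

lemma Bal_mono {a b c n n' : ℕ} (h : n ≤ n') : Bal a b c n ⊆ Bal a b c n' := by
  intro m ⟨h1, h2, h3, h4⟩; exact ⟨h1, h2, h3, le_trans h4 h⟩

lemma WB_mono {a b c n n' : ℕ} (h : n ≤ n') : WB K a b c n ≤ WB K a b c n' :=
  Submodule.span_mono (Set.image_mono (Bal_mono h))

lemma zero_mem_Bal (a b c n : ℕ) : (0 : (Fin 3 × ℕ) →₀ ℕ) ∈ Bal a b c n := by
  refine ⟨by simp, ?_, ?_, ?_⟩ <;> simp [sxm, sym, szm]

lemma add_mem_Bal {a b c n n' : ℕ} {m m' : (Fin 3 × ℕ) →₀ ℕ}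
    (h : m ∈ Bal a b c n) (h' : m' ∈ Bal a b c n') : m + m' ∈ Bal a b c (n + n') := by
  obtain ⟨h1, h2, h3, h4⟩ := h
  obtain ⟨h1', h2', h3', h4'⟩ := h'
  have hs : ∀ (q : ℕ) (f : ℕ → Fin 3 × ℕ), (∑ i ∈ Finset.Icc 1 q, (m + m') (f i))
      = (∑ i ∈ Finset.Icc 1 q, m (f i)) + (∑ i ∈ Finset.Icc 1 q, m' (f i)) := by
    intro q f
    rw [← Finset.sum_add_distrib]
    exact Finset.sum_congr rfl fun i _ => Finsupp.add_apply m m' (f i)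
  refine ⟨?_, ?_, ?_, ?_⟩
  · intro w hw
    rcases Finset.mem_union.mp (Finsupp.support_add hw) with h | h
    · exact h1 w h
    · exact h1' w h
  · simp only [sxm, sym] at *
    rw [hs a (fun i => (0, i)), hs b (fun j => (1, j)), h2, h2']
  · simp only [sxm, szm] at *
    rw [hs a (fun i => (0, i)), hs c (fun k => (2, k)), h3, h3']
  · simp only [sxm] at *
    rw [hs a (fun i => (0, i))]
    omega

lemma one_mem_WB (a b c n : ℕ) : (1 : MvPolynomial (Fin 3 × ℕ) K) ∈ WB K a b c n := by
  apply Submodule.subset_span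
  exact ⟨0, zero_mem_Bal a b c n, by simp⟩

lemma mul_mem_WB {a b c n n' : ℕ} {f g : MvPolynomial (Fin 3 × ℕ) K}
    (hf : f ∈ WB K a b c n) (hg : g ∈ WB K a b c n') : f * g ∈ WB K a b c (n + n') := by
  have : WB K a b c n * WB K a b c n' ≤ WB K a b c (n + n') := by
    rw [WB, WB, Submodule.span_mul_span]
    apply Submodule.span_mono
    rintro x ⟨p, ⟨mp, hmp, rfl⟩, q, ⟨mq, hmq, rfl⟩, rfl⟩
    refine ⟨mp + mq, add_mem_Bal hmp hmq, ?_⟩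
    show (monomial (mp + mq) (1:K) : MvPolynomial (Fin 3 × ℕ) K) = monomial mp 1 * monomial mq 1
    rw [monomial_mul, one_mul]
  exact this (Submodule.mul_mem_mul hf hg)

lemma pow_mem_WB {a b c n : ℕ} {f : MvPolynomial (Fin 3 × ℕ) K}
    (hf : f ∈ WB K a b c n) (k : ℕ) : f ^ k ∈ WB K a b c (n * k) := by
  induction k with
  | zero => simpa using one_mem_WB a b c 0
  | succ k ih =>
    rw [pow_succ, Nat.mul_succ]
    exact mul_mem_WB ih hf

lemma prod_mem_WB {a b c : ℕ} {ι : Type*} (s : Finset ι)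
    (f : ι → MvPolynomial (Fin 3 × ℕ) K) (n : ι → ℕ)
    (hf : ∀ i ∈ s, f i ∈ WB K a b c (n i)) :
    (∏ i ∈ s, f i) ∈ WB K a b c (∑ i ∈ s, n i) := by
  induction s using Finset.induction_on with
  | empty => simpa using one_mem_WB a b c 0
  | insert i s hnotmem ih =>
    rw [Finset.prod_insert hnotmem, Finset.sum_insert hnotmem]
    exact mul_mem_WB (hf i (Finset.mem_insert_self i s))
      (ih fun j hj => hf j (Finset.mem_insert_of_mem hj))

/-- generator membership -/
lemma gen_mem_WB {a b c : ℕ} {v : Pt} (h1 : 1 ≤ v.1) (h2 : v.1 ≤ a)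
    (h3 : 1 ≤ v.2.1) (h4 : v.2.1 ≤ b) (h5 : 1 ≤ v.2.2) (h6 : v.2.2 ≤ c) :
    (X (0, v.1) * X (1, v.2.1) * X (2, v.2.2) : MvPolynomial (Fin 3 × ℕ) K)
      ∈ WB K a b c 1 := by
  set ev : (Fin 3 × ℕ) →₀ ℕ := Finsupp.single ((0 : Fin 3), v.1) 1 +
    Finsupp.single ((1 : Fin 3), v.2.1) 1 + Finsupp.single ((2 : Fin 3), v.2.2) 1 with hev
  have hsum : ∀ (q : ℕ) (s : Fin 3) (t : ℕ), 1 ≤ t → t ≤ q →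
      (∑ i ∈ Finset.Icc 1 q, (Finsupp.single ((s : Fin 3), t) (1:ℕ)) (s, i)) = 1 := by
    intro q s t ht1 ht2
    have : ∀ i ∈ Finset.Icc 1 q, (Finsupp.single ((s : Fin 3), t) (1:ℕ)) (s, i)
        = if i = t then 1 else 0 := by
      intro i _
      rw [Finsupp.single_apply]
      congr 1
      simp [Prod.ext_iff, eq_comm]
    rw [Finset.sum_congr rfl this, Finset.sum_ite_eq' (Finset.Icc 1 q) t (fun _ => 1),
      if_pos (Finset.mem_Icc.mpr ⟨ht1, ht2⟩)]
  have hzero : ∀ (q : ℕ) (s s' : Fin 3) (t : ℕ), s ≠ s' →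
      (∑ i ∈ Finset.Icc 1 q, (Finsupp.single ((s' : Fin 3), t) (1:ℕ)) (s, i)) = 0 := by
    intro q s s' t hss
    apply Finset.sum_eq_zero
    intro i _
    rw [Finsupp.single_apply, if_neg]
    simp [Prod.ext_iff]
    intro h; exact absurd h.symm hss
  have hbal : ev ∈ Bal a b c 1 := by
    refine ⟨?_, ?_, ?_, ?_⟩
    · intro w hw
      have := Finsupp.support_add (Finsupp.support_add hw |> fun _ => hw)
      -- support chase
      have hsub : ev.support ⊆ {((0 : Fin 3), v.1), ((1 : Fin 3), v.2.1), ((2 : Fin 3), v.2.2)} := by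
        rw [hev]
        refine subset_trans Finsupp.support_add ?_
        intro u hu
        rcases Finset.mem_union.mp hu with hu | hu
        · rcases Finset.mem_union.mp (Finsupp.support_add hu) with hu | hu
          · have := Finsupp.support_single_subset hu
            simp only [Finset.mem_singleton] at this
            simp [this]
          · have := Finsupp.support_single_subset hu
            simp only [Finset.mem_singleton] at this
            simp [this]
        · have := Finsupp.support_single_subset hu
          simp only [Finset.mem_singleton] at this
          simp [this]
      have hw' := hsub hw
      simp only [Finset.mem_insert, Finset.mem_singleton] at hw'
      rcases hw' with rfl | rfl | rfl
      · exact Finset.mem_union.mpr (Or.inl (Finset.mem_union.mpr (Or.inl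
          (Finset.mem_image.mpr ⟨v.1, Finset.mem_Icc.mpr ⟨h1, h2⟩, rfl⟩))))
      · exact Finset.mem_union.mpr (Or.inl (Finset.mem_union.mpr (Or.inr
          (Finset.mem_image.mpr ⟨v.2.1, Finset.mem_Icc.mpr ⟨h3, h4⟩, rfl⟩))))
      · exact Finset.mem_union.mpr (Or.inr
          (Finset.mem_image.mpr ⟨v.2.2, Finset.mem_Icc.mpr ⟨h5, h6⟩, rfl⟩))
    · show sxm a ev = sym b ev
      simp only [sxm, sym, hev, Finsupp.add_apply, Finset.sum_add_distrib]
      rw [hsum a 0 v.1 h1 h2, hsum b 1 v.2.1 h3 h4,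
        hzero a 0 1 v.2.1 (by decide), hzero a 0 2 v.2.2 (by decide),
        hzero b 1 0 v.1 (by decide), hzero b 1 2 v.2.2 (by decide)]
    · show sxm a ev = szm c ev
      simp only [sxm, szm, hev, Finsupp.add_apply, Finset.sum_add_distrib]
      rw [hsum a 0 v.1 h1 h2, hsum c 2 v.2.2 h5 h6,
        hzero a 0 1 v.2.1 (by decide), hzero a 0 2 v.2.2 (by decide),
        hzero c 2 0 v.1 (by decide), hzero c 2 1 v.2.1 (by decide)]
    · show sxm a ev ≤ 1
      simp only [sxm, hev, Finsupp.add_apply, Finset.sum_add_distrib]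
      rw [hsum a 0 v.1 h1 h2,
        hzero a 0 1 v.2.1 (by decide), hzero a 0 2 v.2.2 (by decide)]
  have hXX : (X (0, v.1) * X (1, v.2.1) * X (2, v.2.2) : MvPolynomial (Fin 3 × ℕ) K)
      = monomial ev 1 := by
    rw [hev]
    rw [X, X, X, monomial_mul, monomial_mul, one_mul, one_mul]
  rw [hXX]
  exact Submodule.subset_span ⟨ev, hbal, rfl⟩

/-! counting -/

noncomputable def MMf (a b c Dg : ℕ) : (Fin 3 × ℕ) →₀ ℕ :=
  ∑ w ∈ Vf a b c, Finsupp.single w Dg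

lemma MMf_apply_of_not_mem {a b c Dg : ℕ} {w : Fin 3 × ℕ} (h : w ∉ Vf a b c) :
    MMf a b c Dg w = 0 := by
  rw [MMf, Finsupp.finset_sum_apply]
  apply Finset.sum_eq_zero
  intro u hu
  rw [Finsupp.single_apply, if_neg]
  rintro rfl; exact h hu

lemma MMf_apply_le {a b c Dg : ℕ} (w : Fin 3 × ℕ) : MMf a b c Dg w ≤ Dg := by
  rw [MMf, Finsupp.finset_sum_apply]
  by_cases h : w ∈ Vf a b c
  · have : ∀ u ∈ Vf a b c, (Finsupp.single u Dg) w = if u = w then Dg else 0 :=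
      fun u _ => Finsupp.single_apply
    rw [Finset.sum_congr rfl this, Finset.sum_ite_eq' (Vf a b c) w (fun _ => Dg), if_pos h]
  · have : ∀ u ∈ Vf a b c, (Finsupp.single u Dg) w = 0 := by
      intro u hu
      rw [Finsupp.single_apply, if_neg]
      rintro rfl; exact h hu
    rw [Finset.sum_congr rfl this, Finset.sum_const_zero]
    exact Nat.zero_le _

noncomputable def SD (a b c Dg : ℕ) : Finset ((Fin 3 × ℕ) →₀ ℕ) :=
  (Finset.Iic (MMf a b c Dg)).filter (fun m => m ∈ Bal a b c Dg)

lemma single_le_group_sum {m : (Fin 3 × ℕ) →₀ ℕ} {s : Fin 3} {q i : ℕ}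
    (hi : i ∈ Finset.Icc 1 q) : m (s, i) ≤ ∑ t ∈ Finset.Icc 1 q, m (s, t) :=
  Finset.single_le_sum (f := fun t => m (s, t)) (fun _ _ => Nat.zero_le _) hi

lemma Bal_subset_SD {a b c Dg : ℕ} {m : (Fin 3 × ℕ) →₀ ℕ} (h : m ∈ Bal a b c Dg) :
    m ∈ SD a b c Dg := by
  obtain ⟨h1, h2, h3, h4⟩ := h
  rw [SD, Finset.mem_filter]
  refine ⟨Finset.mem_Iic.mpr ?_, h1, h2, h3, h4⟩
  rw [Finsupp.le_iff]
  intro w hw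
  have hwV := h1 w hw
  rcases Finset.mem_union.mp hwV with hu | hu
  · rcases Finset.mem_union.mp hu with hu | hu
    · obtain ⟨i, hi, rfl⟩ := Finset.mem_image.mp hu
      calc m (0, i) ≤ sxm a m := single_le_group_sum hi
        _ ≤ Dg := h4
        _ = MMf a b c Dg (0, i) := by
          rw [MMf, Finsupp.finset_sum_apply]
          have : ∀ u ∈ Vf a b c, (Finsupp.single u Dg) ((0:Fin 3), i)
              = if u = ((0:Fin 3), i) then Dg else 0 := fun u _ => Finsupp.single_apply
          rw [Finset.sum_congr rfl this,
            Finset.sum_ite_eq' (Vf a b c) _ (fun _ => Dg), if_pos hwV]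
    · obtain ⟨j, hj, rfl⟩ := Finset.mem_image.mp hu
      calc m (1, j) ≤ sym b m := single_le_group_sum hj
        _ = sxm a m := h2.symm
        _ ≤ Dg := h4
        _ = MMf a b c Dg (1, j) := by
          rw [MMf, Finsupp.finset_sum_apply]
          have : ∀ u ∈ Vf a b c, (Finsupp.single u Dg) ((1:Fin 3), j)
              = if u = ((1:Fin 3), j) then Dg else 0 := fun u _ => Finsupp.single_apply
          rw [Finset.sum_congr rfl this,
            Finset.sum_ite_eq' (Vf a b c) _ (fun _ => Dg), if_pos hwV]
  · obtain ⟨k, hk, rfl⟩ := Finset.mem_image.mp hu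
    calc m (2, k) ≤ szm c m := single_le_group_sum hk
      _ = sxm a m := h3.symm
      _ ≤ Dg := h4
      _ = MMf a b c Dg (2, k) := by
        rw [MMf, Finsupp.finset_sum_apply]
        have : ∀ u ∈ Vf a b c, (Finsupp.single u Dg) ((2:Fin 3), k)
            = if u = ((2:Fin 3), k) then Dg else 0 := fun u _ => Finsupp.single_apply
        rw [Finset.sum_congr rfl this,
          Finset.sum_ite_eq' (Vf a b c) _ (fun _ => Dg), if_pos hwV]

def Vp (a b c : ℕ) : Finset (Fin 3 × ℕ) :=
  (((Vf a b c).erase ((0 : Fin 3), a)).erase ((1 : Fin 3), b)).erase ((2 : Fin 3), c)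

lemma mem_Vf_cases {a b c : ℕ} {w : Fin 3 × ℕ} (h : w ∈ Vf a b c) :
    (∃ i, 1 ≤ i ∧ i ≤ a ∧ w = ((0 : Fin 3), i)) ∨
    (∃ j, 1 ≤ j ∧ j ≤ b ∧ w = ((1 : Fin 3), j)) ∨
    (∃ k, 1 ≤ k ∧ k ≤ c ∧ w = ((2 : Fin 3), k)) := by
  rcases Finset.mem_union.mp h with h | h
  · rcases Finset.mem_union.mp h with h | h
    · obtain ⟨i, hi, rfl⟩ := Finset.mem_image.mp h
      exact Or.inl ⟨i, (Finset.mem_Icc.mp hi).1, (Finset.mem_Icc.mp hi).2, rfl⟩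
    · obtain ⟨j, hj, rfl⟩ := Finset.mem_image.mp h
      exact Or.inr (Or.inl ⟨j, (Finset.mem_Icc.mp hj).1, (Finset.mem_Icc.mp hj).2, rfl⟩)
  · obtain ⟨k, hk, rfl⟩ := Finset.mem_image.mp h
    exact Or.inr (Or.inr ⟨k, (Finset.mem_Icc.mp hk).1, (Finset.mem_Icc.mp hk).2, rfl⟩)

lemma x_mem_Vf {a b c i : ℕ} (h1 : 1 ≤ i) (h2 : i ≤ a) : ((0 : Fin 3), i) ∈ Vf a b c :=
  Finset.mem_union.mpr (Or.inl (Finset.mem_union.mpr (Or.inl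
    (Finset.mem_image.mpr ⟨i, Finset.mem_Icc.mpr ⟨h1, h2⟩, rfl⟩))))

lemma y_mem_Vf {a b c j : ℕ} (h1 : 1 ≤ j) (h2 : j ≤ b) : ((1 : Fin 3), j) ∈ Vf a b c :=
  Finset.mem_union.mpr (Or.inl (Finset.mem_union.mpr (Or.inr
    (Finset.mem_image.mpr ⟨j, Finset.mem_Icc.mpr ⟨h1, h2⟩, rfl⟩))))

lemma z_mem_Vf {a b c k : ℕ} (h1 : 1 ≤ k) (h2 : k ≤ c) : ((2 : Fin 3), k) ∈ Vf a b c :=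
  Finset.mem_union.mpr (Or.inr (Finset.mem_image.mpr ⟨k, Finset.mem_Icc.mpr ⟨h1, h2⟩, rfl⟩))

lemma Vf_card {a b c : ℕ} : (Vf a b c).card = a + b + c := by
  have hinj0 : Function.Injective (fun i : ℕ => ((0 : Fin 3), i)) := by
    intro x y h; simpa [Prod.ext_iff] using h
  have hinj1 : Function.Injective (fun j : ℕ => ((1 : Fin 3), j)) := by
    intro x y h; simpa [Prod.ext_iff] using h
  have hinj2 : Function.Injective (fun k : ℕ => ((2 : Fin 3), k)) := by
    intro x y h; simpa [Prod.ext_iff] using h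
  have d2 : Disjoint ((Finset.Icc 1 a).image fun i => ((0 : Fin 3), i))
      ((Finset.Icc 1 b).image fun j => ((1 : Fin 3), j)) := by
    rw [Finset.disjoint_left]
    rintro w hw hw'
    obtain ⟨i, _, rfl⟩ := Finset.mem_image.mp hw
    obtain ⟨j, _, hj⟩ := Finset.mem_image.mp hw'
    exact absurd (congrArg Prod.fst hj) (by simp)
  have d1 : Disjoint (((Finset.Icc 1 a).image fun i => ((0 : Fin 3), i)) ∪
      ((Finset.Icc 1 b).image fun j => ((1 : Fin 3), j)))
      ((Finset.Icc 1 c).image fun k => ((2 : Fin 3), k)) := by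
    rw [Finset.disjoint_left]
    rintro w hw hw'
    obtain ⟨k, _, hk⟩ := Finset.mem_image.mp hw'
    rcases Finset.mem_union.mp hw with h | h
    · obtain ⟨i, _, rfl⟩ := Finset.mem_image.mp h
      exact absurd (congrArg Prod.fst hk) (by simp)
    · obtain ⟨j, _, rfl⟩ := Finset.mem_image.mp h
      exact absurd (congrArg Prod.fst hk) (by simp)
  rw [Vf, Finset.card_union_of_disjoint d1, Finset.card_union_of_disjoint d2,
    Finset.card_image_of_injective _ hinj0, Finset.card_image_of_injective _ hinj1,
    Finset.card_image_of_injective _ hinj2, Nat.card_Icc, Nat.card_Icc, Nat.card_Icc]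
  omega

lemma Vp_card {a b c : ℕ} (ha : 1 ≤ a) (hb : 1 ≤ b) (hc : 1 ≤ c) :
    (Vp a b c).card = a + b + c - 3 := by
  have m1 : ((0 : Fin 3), a) ∈ Vf a b c := x_mem_Vf ha le_rfl
  have m2 : ((1 : Fin 3), b) ∈ (Vf a b c).erase ((0 : Fin 3), a) :=
    Finset.mem_erase.mpr ⟨by simp [Prod.ext_iff], y_mem_Vf hb le_rfl⟩
  have m3 : ((2 : Fin 3), c) ∈ ((Vf a b c).erase ((0 : Fin 3), a)).erase ((1 : Fin 3), b) :=
    Finset.mem_erase.mpr ⟨by simp [Prod.ext_iff],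
      Finset.mem_erase.mpr ⟨by simp [Prod.ext_iff], z_mem_Vf hc le_rfl⟩⟩
  rw [Vp, Finset.card_erase_of_mem m3, Finset.card_erase_of_mem m2,
    Finset.card_erase_of_mem m1, Vf_card]
  omega

lemma sxm_split {a : ℕ} (ha : 1 ≤ a) (m : (Fin 3 × ℕ) →₀ ℕ) :
    sxm a m = (∑ i ∈ Finset.Icc 1 (a - 1), m (0, i)) + m (0, a) := by
  have : a = (a - 1) + 1 := by omega
  rw [sxm, this]
  rw [Finset.sum_Icc_succ_top (by omega)]
  simp

lemma sym_split {b : ℕ} (hb : 1 ≤ b) (m : (Fin 3 × ℕ) →₀ ℕ) :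
    sym b m = (∑ j ∈ Finset.Icc 1 (b - 1), m (1, j)) + m (1, b) := by
  have : b = (b - 1) + 1 := by omega
  rw [sym, this]
  rw [Finset.sum_Icc_succ_top (by omega)]
  simp

lemma szm_split {c : ℕ} (hc : 1 ≤ c) (m : (Fin 3 × ℕ) →₀ ℕ) :
    szm c m = (∑ k ∈ Finset.Icc 1 (c - 1), m (2, k)) + m (2, c) := by
  have : c = (c - 1) + 1 := by omega
  rw [szm, this]
  rw [Finset.sum_Icc_succ_top (by omega)]
  simp

lemma ne_of_fst {s s' : Fin 3} {t t' : ℕ} (h : s ≠ s') : ((s, t) : Fin 3 × ℕ) ≠ (s', t') :=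
  fun heq => h (congrArg Prod.fst heq)

lemma ne_of_snd {s s' : Fin 3} {t t' : ℕ} (h : t ≠ t') : ((s, t) : Fin 3 × ℕ) ≠ (s', t') :=
  fun heq => h (congrArg Prod.snd heq)

lemma mem_Vp {a b c : ℕ} {w : Fin 3 × ℕ} (hV : w ∈ Vf a b c)
    (h0 : w ≠ ((0 : Fin 3), a)) (h1 : w ≠ ((1 : Fin 3), b)) (h2 : w ≠ ((2 : Fin 3), c)) :
    w ∈ Vp a b c := by
  rw [Vp]
  exact Finset.mem_erase.mpr ⟨h2, Finset.mem_erase.mpr ⟨h1, Finset.mem_erase.mpr ⟨h0, hV⟩⟩⟩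

lemma not_mem_Vp_cases {a b c : ℕ} {w : Fin 3 × ℕ} (hV : w ∈ Vf a b c)
    (hP : w ∉ Vp a b c) :
    w = ((0 : Fin 3), a) ∨ w = ((1 : Fin 3), b) ∨ w = ((2 : Fin 3), c) := by
  by_contra h
  push_neg at h
  exact hP (mem_Vp hV h.1 h.2.1 h.2.2)

lemma SD_card_le {a b c : ℕ} (ha : 1 ≤ a) (hb : 1 ≤ b) (hc : 1 ≤ c) (Dg : ℕ) :
    (SD a b c Dg).card ≤ (Dg + 1) ^ (a + b + c - 2) := by
  set Φ : ((Fin 3 × ℕ) →₀ ℕ) → Fin (Dg + 1) × (↥(Vp a b c) → Fin (Dg + 1)) := fun m =>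
    (⟨min (sxm a m) Dg, by omega⟩, fun w => ⟨min (m w.1) Dg, by omega⟩) with hΦ
  have hfacts : ∀ m ∈ SD a b c Dg, (∀ w, m w ≤ Dg) ∧ sxm a m ≤ Dg ∧
      (∀ w, w ∉ Vf a b c → m w = 0) ∧ sxm a m = sym b m ∧ sxm a m = szm c m := by
    intro m hm
    rw [SD, Finset.mem_filter, Finset.mem_Iic] at hm
    obtain ⟨hle, h1, h2, h3, h4⟩ := hm
    refine ⟨fun w => le_trans (Finsupp.le_def.mp hle w) (MMf_apply_le w), h4, ?_, h2, h3⟩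
    intro w hw
    have := Finsupp.le_def.mp hle w
    rw [MMf_apply_of_not_mem hw] at this
    omega
  have hinj : Set.InjOn Φ (SD a b c Dg : Set ((Fin 3 × ℕ) →₀ ℕ)) := by
    intro m1 hm1 m2 hm2 heq
    obtain ⟨f1, g1, z1, e1, e1'⟩ := hfacts m1 hm1
    obtain ⟨f2, g2, z2, e2, e2'⟩ := hfacts m2 hm2
    have hfst : sxm a m1 = sxm a m2 := by
      have h := congrArg (fun p : Fin (Dg + 1) × (↥(Vp a b c) → Fin (Dg + 1)) => (p.1 : ℕ)) heq
      simpa [hΦ, Nat.min_eq_left g1, Nat.min_eq_left g2] using h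
    have hVp : ∀ w, w ∈ Vp a b c → m1 w = m2 w := by
      intro w hw
      have h := congrArg (fun p : Fin (Dg + 1) × (↥(Vp a b c) → Fin (Dg + 1)) => (p.2 ⟨w, hw⟩ : ℕ)) heq
      simpa [hΦ, Nat.min_eq_left (f1 w), Nat.min_eq_left (f2 w)] using h
    ext w
    by_cases hV : w ∈ Vf a b c
    · by_cases hP : w ∈ Vp a b c
      · exact hVp w hP
      · rcases not_mem_Vp_cases hV hP with rfl | rfl | rfl
        · have hsum1 := sxm_split ha m1
          have hsum2 := sxm_split ha m2
          have hsame : (∑ i ∈ Finset.Icc 1 (a - 1), m1 (0, i)) =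
              ∑ i ∈ Finset.Icc 1 (a - 1), m2 (0, i) := by
            apply Finset.sum_congr rfl
            intro i hi
            obtain ⟨hi1', hi2'⟩ := Finset.mem_Icc.mp hi
            exact hVp _ (mem_Vp (x_mem_Vf hi1' (by omega)) (ne_of_snd (by omega))
              (ne_of_fst (by decide)) (ne_of_fst (by decide)))
          omega
        · have hsum1 := sym_split hb m1
          have hsum2 := sym_split hb m2
          have he1 := e1; have he2 := e2
          have hsame : (∑ j ∈ Finset.Icc 1 (b - 1), m1 (1, j)) =
              ∑ j ∈ Finset.Icc 1 (b - 1), m2 (1, j) := by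
            apply Finset.sum_congr rfl
            intro j hj
            obtain ⟨hj1', hj2'⟩ := Finset.mem_Icc.mp hj
            exact hVp _ (mem_Vp (y_mem_Vf hj1' (by omega)) (ne_of_fst (by decide))
              (ne_of_snd (by omega)) (ne_of_fst (by decide)))
          omega
        · have hsum1 := szm_split hc m1
          have hsum2 := szm_split hc m2
          have he1 := e1'; have he2 := e2'
          have hsame : (∑ k ∈ Finset.Icc 1 (c - 1), m1 (2, k)) =
              ∑ k ∈ Finset.Icc 1 (c - 1), m2 (2, k) := by
            apply Finset.sum_congr rfl
            intro k hk
            obtain ⟨hk1', hk2'⟩ := Finset.mem_Icc.mp hk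
            exact hVp _ (mem_Vp (z_mem_Vf hk1' (by omega)) (ne_of_fst (by decide))
              (ne_of_fst (by decide)) (ne_of_snd (by omega)))
          omega
    · rw [z1 w hV, z2 w hV]
  have hcard := Finset.card_le_card_of_injOn Φ (fun m _ => Finset.mem_univ (Φ m)) hinj
  have hTcard : Fintype.card (Fin (Dg + 1) × (↥(Vp a b c) → Fin (Dg + 1)))
      = (Dg + 1) ^ (a + b + c - 2) := by
    rw [Fintype.card_prod, Fintype.card_fun, Fintype.card_fin, Fintype.card_coe,
      Vp_card ha hb hc, ← pow_succ']
    congr 1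
    omega
  rwa [Finset.card_univ, hTcard] at hcard

lemma adjoin_mem_WB {a b c : ℕ} {S : Set (MvPolynomial (Fin 3 × ℕ) K)}
    (hS : ∀ f ∈ S, f ∈ WB K a b c 1) {f : MvPolynomial (Fin 3 × ℕ) K}
    (hf : f ∈ Algebra.adjoin K S) : ∃ n, f ∈ WB K a b c n := by
  induction hf using Algebra.adjoin_induction with
  | mem x hx => exact ⟨1, hS x hx⟩
  | algebraMap r =>
    refine ⟨0, ?_⟩
    rw [Algebra.algebraMap_eq_smul_one]
    exact Submodule.smul_mem _ _ (one_mem_WB a b c 0)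
  | add x y hx hy ihx ihy =>
    obtain ⟨n, hn⟩ := ihx
    obtain ⟨n', hn'⟩ := ihy
    exact ⟨max n n', Submodule.add_mem _ (WB_mono (le_max_left _ _) hn)
      (WB_mono (le_max_right _ _) hn')⟩
  | mul x y hx hy ihx ihy =>
    obtain ⟨n, hn⟩ := ihx
    obtain ⟨n', hn'⟩ := ihy
    exact ⟨n + n', mul_mem_WB hn hn'⟩

lemma numeric_ineq (L n₀ d : ℕ) (hL : L = d + 1) (hd : 1 ≤ d) :
    (L * (n₀ * (L * (n₀ + 1)) ^ d) + 1) ^ d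
      < ((L * (n₀ + 1)) ^ d + 1) ^ L := by
  subst hL
  set C := (d + 1) * (n₀ + 1) with hC
  set N := C ^ d with hN
  have h1 : (d + 1) * (n₀ * N) + 1 ≤ C * (N + 1) := by
    have hC1 : 0 < C := by positivity
    have h2 : C * (N + 1) = (d + 1) * (n₀ + 1) * N + C := by ring
    nlinarith
  calc ((d + 1) * (n₀ * N) + 1) ^ d ≤ (C * (N + 1)) ^ d := Nat.pow_le_pow_left h1 d
    _ = C ^ d * (N + 1) ^ d := mul_pow _ _ _
    _ = N * (N + 1) ^ d := by rw [← hN]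
    _ < (N + 1) * (N + 1) ^ d := by
        have : 0 < (N + 1) ^ d := by positivity
        exact Nat.mul_lt_mul_of_lt_of_le (Nat.lt_succ_self N) le_rfl this
    _ = (N + 1) ^ (d + 1) := by rw [pow_succ]; ring

lemma exists_annihilating {a b c : ℕ} (ha : 1 ≤ a) (hb : 1 ≤ b) (hc : 1 ≤ c)
    {S : Set (MvPolynomial (Fin 3 × ℕ) K)} (hS : ∀ f ∈ S, f ∈ WB K a b c 1)
    (ℓ : ℕ) (hℓ : ℓ = a + b + c - 1)
    (y : Fin ℓ → ↥(Algebra.adjoin K S)) :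
    ∃ Q : MvPolynomial (Fin ℓ) K, Q ≠ 0 ∧ aeval y Q = 0 := by
  set d := a + b + c - 2 with hdd
  have hd1 : 1 ≤ d := by omega
  have hℓd : ℓ = d + 1 := by omega
  -- uniform degree bound for the y's
  have hyW : ∀ t : Fin ℓ, ∃ n, ((y t : MvPolynomial (Fin 3 × ℕ) K)) ∈ WB K a b c n :=
    fun t => adjoin_mem_WB hS (y t).2
  choose nf hnf using hyW
  set n₀ := Finset.univ.sup nf with hn₀
  have hyW0 : ∀ t : Fin ℓ, ((y t : MvPolynomial (Fin 3 × ℕ) K)) ∈ WB K a b c n₀ :=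
    fun t => WB_mono (Finset.le_sup (Finset.mem_univ t)) (hnf t)
  set C := ℓ * (n₀ + 1) with hCC
  set N := C ^ d with hNN
  set Dg := ℓ * (n₀ * N) with hDg
  -- the family of products
  set F : (Fin ℓ → Fin (N + 1)) → MvPolynomial (Fin 3 × ℕ) K := fun i => ∏ t : Fin ℓ, (y t : MvPolynomial (Fin 3 × ℕ) K) ^ (i t : ℕ) with hF
  have hFW : ∀ i, F i ∈ WB K a b c Dg := by
    intro i
    have h1 : F i ∈ WB K a b c (∑ t : Fin ℓ, n₀ * (i t : ℕ)) := by
      apply prod_mem_WB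
      intro t _
      exact pow_mem_WB (hyW0 t) _
    apply WB_mono _ h1
    calc (∑ t : Fin ℓ, n₀ * (i t : ℕ)) ≤ ∑ _t : Fin ℓ, n₀ * N := by
          apply Finset.sum_le_sum
          intro t _
          exact Nat.mul_le_mul_left n₀ (Nat.lt_succ_iff.mp (i t).isLt)
      _ = ℓ * (n₀ * N) := by rw [Finset.sum_const, Finset.card_univ, Fintype.card_fin]; ring
  -- finite-dimensional envelope
  set sFin : Finset (MvPolynomial (Fin 3 × ℕ) K) := (SD a b c Dg).image (fun m => (monomial m (1 : K) : MvPolynomial (Fin 3 × ℕ) K)) with hsFin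
  set Wspan : Submodule K (MvPolynomial (Fin 3 × ℕ) K) := Submodule.span K (sFin : Set (MvPolynomial (Fin 3 × ℕ) K)) with hWspan
  have hWD : WB K a b c Dg ≤ Wspan := by
    rw [WB, hWspan]
    apply Submodule.span_le.mpr
    rintro x ⟨m, hm, rfl⟩
    exact Submodule.subset_span (Finset.mem_coe.mpr
      (Finset.mem_image.mpr ⟨m, Bal_subset_SD hm, rfl⟩))
  haveI : FiniteDimensional K ↥Wspan := FiniteDimensional.span_finset K sFin
  have hrank : Module.finrank K ↥Wspan ≤ (Dg + 1) ^ d := by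
    calc Module.finrank K ↥Wspan ≤ sFin.card := finrank_span_finset_le_card sFin
      _ ≤ (SD a b c Dg).card := Finset.card_image_le
      _ ≤ (Dg + 1) ^ (a + b + c - 2) := SD_card_le ha hb hc Dg
  have hcardι : Fintype.card (Fin ℓ → Fin (N + 1)) = (N + 1) ^ ℓ := by
    rw [Fintype.card_fun, Fintype.card_fin, Fintype.card_fin]
  have hlt : Module.finrank K ↥Wspan < Fintype.card (Fin ℓ → Fin (N + 1)) := by
    rw [hcardι]
    have key := numeric_ineq ℓ n₀ d hℓd hd1
    rw [← hCC, ← hNN, ← hDg] at key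
    exact lt_of_le_of_lt hrank key
  -- a nontrivial linear relation
  set F' : (Fin ℓ → Fin (N + 1)) → ↥Wspan := fun i => ⟨F i, hWD (hFW i)⟩ with hF'
  have hnli : ¬ LinearIndependent K F' := by
    intro h
    exact absurd h.fintype_card_le_finrank (not_le_of_gt hlt)
  obtain ⟨g, hrel, i₀, hgi₀⟩ := Fintype.not_linearIndependent_iff.mp hnli
  have hrelR : (∑ i, g i • F i) = (0 : MvPolynomial (Fin 3 × ℕ) K) := by
    have := congrArg (Subtype.val) hrel
    simpa using this
  -- build the annihilating polynomial
  set βf : (Fin ℓ → Fin (N + 1)) → (Fin ℓ →₀ ℕ) :=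
    fun i => Finsupp.equivFunOnFinite.symm (fun t => (i t : ℕ)) with hβf
  have hβinj : Function.Injective βf := by
    intro i j h
    funext t
    have := congrArg (fun m : Fin ℓ →₀ ℕ => m t) h
    simp only [hβf, Finsupp.coe_equivFunOnFinite_symm] at this
    exact Fin.ext this
  set Q : MvPolynomial (Fin ℓ) K := ∑ i, monomial (βf i) (g i) with hQ
  refine ⟨Q, ?_, ?_⟩
  · intro hQ0
    apply hgi₀
    have : coeff (βf i₀) Q = g i₀ := by
      rw [hQ, MvPolynomial.coeff_sum]
      rw [Finset.sum_eq_single i₀]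
      · rw [coeff_monomial, if_pos rfl]
      · intro i _ hne
        rw [coeff_monomial, if_neg (fun hc => hne (hβinj hc))]
      · intro h; exact absurd (Finset.mem_univ i₀) h
    rw [← this, hQ0]
    simp
  · have hval : ((aeval y Q : ↥(Algebra.adjoin K S)) : MvPolynomial (Fin 3 × ℕ) K) = ∑ i, g i • F i := by
      rw [hQ, map_sum]
      push_cast
      apply Finset.sum_congr rfl
      intro i _
      rw [aeval_monomial]
      rw [Finsupp.prod_fintype _ _ (fun t => pow_zero _)]
      calc ((algebraMap K ↥(Algebra.adjoin K S) (g i) *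
            ∏ t : Fin ℓ, y t ^ (βf i) t : ↥(Algebra.adjoin K S)) : MvPolynomial (Fin 3 × ℕ) K)
          = (algebraMap K (MvPolynomial (Fin 3 × ℕ) K) (g i)) *
              ∏ t : Fin ℓ, (y t : MvPolynomial (Fin 3 × ℕ) K) ^ ((βf i) t) := by
            push_cast
            rfl
        _ = g i • F i := by
            rw [Algebra.smul_def, hF]
            congr 1
    have : ((aeval y Q : ↥(Algebra.adjoin K S)) : MvPolynomial (Fin 3 × ℕ) K) = 0 := by
      rw [hval, hrelR]
    exact_mod_cast this

end Sec5


section Sec6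
variable {K : Type*} [Field K]

/-- the chain of variable sets -/
def SS (a b c d : ℕ) (t : ℕ) : Set (Fin 3 × ℕ) :=
  {w | (w.1 = 0 ∧ 2 ≤ w.2 ∧ a < w.2 + t) ∨
       (w.1 = 1 ∧ 2 ≤ w.2 ∧ a + b - 1 < w.2 + t) ∨
       (w.1 = 2 ∧ 2 ≤ w.2 ∧ a + b + c - 2 < w.2 + t) ∨
       (w.2 = 1 ∧ d ≤ t)}

lemma SS_mono {a b c d : ℕ} {t t' : ℕ} (h : t ≤ t') : SS a b c d t ⊆ SS a b c d t' := by
  intro w hw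
  rcases hw with ⟨h1, h2, h3⟩ | ⟨h1, h2, h3⟩ | ⟨h1, h2, h3⟩ | ⟨h1, h2⟩
  · exact Or.inl ⟨h1, h2, by omega⟩
  · exact Or.inr (Or.inl ⟨h1, h2, by omega⟩)
  · exact Or.inr (Or.inr (Or.inl ⟨h1, h2, by omega⟩))
  · exact Or.inr (Or.inr (Or.inr ⟨h1, by omega⟩))

/-- witness points along the chain -/
def wit (a b c d : ℕ) (t : ℕ) : Pt :=
  if t ≤ a - 1 then (a + 1 - t, 1, 1)
  else if t ≤ a + b - 2 then (1, a + b - t, 1)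
  else if t ≤ d - 1 then (1, 1, a + b + c - 1 - t)
  else (1, 1, 1)

variable {D : Finset Pt} (hD : IsFerrers D) (hne : D.Nonempty)

section ChainFacts

variable (ha : 1 ≤ aD D) (hb : 1 ≤ bD D) (hc : 1 ≤ cD D)

include hD hne in
lemma wit_mem_D {t : ℕ} (h1 : 1 ≤ t) (h2 : t ≤ aD D + bD D + cD D - 2) :
    wit (aD D) (bD D) (cD D) (aD D + bD D + cD D - 2) t ∈ D := by
  have ha := aD_pos hD hne
  have hb := bD_pos hD hne
  have hc := cD_pos hD hne
  rw [wit]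
  split_ifs with c1 c2 c3
  · exact mem_D_x hD hne (by omega) (by omega)
  · exact mem_D_y hD hne (by omega) (by omega)
  · exact mem_D_z hD hne (by omega) (by omega)
  · exact mem_D_x hD hne le_rfl ha

lemma genFun_wit_mem {a b c d t : ℕ} (ha : 1 ≤ a) (hb : 1 ≤ b) (hc : 1 ≤ c)
    (hd : d = a + b + c - 2) (h1 : 1 ≤ t) (h2 : t ≤ d) :
    (X (0, (wit a b c d t).1) * X (1, (wit a b c d t).2.1) * X (2, (wit a b c d t).2.2) :
      MvPolynomial (Fin 3 × ℕ) K) ∈ QS K (SS a b c d t) := by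
  rw [wit]
  split_ifs with c1 c2 c3
  · -- x-variable is in S t
    have : ((0 : Fin 3), a + 1 - t) ∈ SS a b c d t := Or.inl ⟨rfl, by omega, by omega⟩
    exact Ideal.mul_mem_right _ _ (Ideal.mul_mem_right _ _ (X_mem_QS this))
  · have : ((1 : Fin 3), a + b - t) ∈ SS a b c d t := Or.inr (Or.inl ⟨rfl, by omega, by omega⟩)
    exact Ideal.mul_mem_right _ _ (Ideal.mul_mem_left _ _ (X_mem_QS this))
  · have : ((2 : Fin 3), a + b + c - 1 - t) ∈ SS a b c d t :=
      Or.inr (Or.inr (Or.inl ⟨rfl, by omega, by omega⟩))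
    exact Ideal.mul_mem_left _ _ (X_mem_QS this)
  · have : ((0 : Fin 3), 1) ∈ SS a b c d t := by
      have ht : t = d := by omega
      exact Or.inr (Or.inr (Or.inr ⟨rfl, by omega⟩))
    exact Ideal.mul_mem_right _ _ (Ideal.mul_mem_right _ _ (X_mem_QS this))

lemma genFun_wit_not_mem {a b c d t : ℕ} (ha : 1 ≤ a) (hb : 1 ≤ b) (hc : 1 ≤ c)
    (hd : d = a + b + c - 2) (h1 : 1 ≤ t) (h2 : t ≤ d) :
    (X (0, (wit a b c d t).1) * X (1, (wit a b c d t).2.1) * X (2, (wit a b c d t).2.2) :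
      MvPolynomial (Fin 3 × ℕ) K) ∉ QS K (SS a b c d (t - 1)) := by
  have hnm : ∀ s : Fin 3, ∀ i : ℕ,
      (s = 0 → ¬ (2 ≤ i ∧ a < i + (t-1))) →
      (s = 1 → ¬ (2 ≤ i ∧ a + b - 1 < i + (t-1))) →
      (s = 2 → ¬ (2 ≤ i ∧ a + b + c - 2 < i + (t-1))) →
      (i ≠ 1 ∨ ¬ (d ≤ t - 1)) → ((s, i) : Fin 3 × ℕ) ∉ SS a b c d (t - 1) := by
    intro s i hx hy hz hl hmem
    rcases hmem with ⟨e1, e2⟩ | ⟨e1, e2⟩ | ⟨e1, e2⟩ | ⟨e1, e2⟩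
    · exact hx e1 e2
    · exact hy e1 e2
    · exact hz e1 e2
    · rcases hl with hl | hl
      · exact hl e1
      · exact hl e2
  rw [wit]
  split_ifs with c1 c2 c3
  · apply triple_X_not_mem_QS
    · exact hnm 0 (a + 1 - t) (fun _ => by omega) (fun h => by exact absurd h (by decide))
        (fun h => by exact absurd h (by decide)) (Or.inl (by omega))
    · exact hnm 1 1 (fun h => by exact absurd h (by decide)) (fun _ => by omega)
        (fun h => by exact absurd h (by decide)) (Or.inr (by omega))
    · exact hnm 2 1 (fun h => by exact absurd h (by decide))
        (fun h => by exact absurd h (by decide)) (fun _ => by omega) (Or.inr (by omega))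
  · apply triple_X_not_mem_QS
    · exact hnm 0 1 (fun _ => by omega) (fun h => by exact absurd h (by decide))
        (fun h => by exact absurd h (by decide)) (Or.inr (by omega))
    · exact hnm 1 (a + b - t) (fun h => by exact absurd h (by decide)) (fun _ => by omega)
        (fun h => by exact absurd h (by decide)) (Or.inl (by omega))
    · exact hnm 2 1 (fun h => by exact absurd h (by decide))
        (fun h => by exact absurd h (by decide)) (fun _ => by omega) (Or.inr (by omega))
  · apply triple_X_not_mem_QS
    · exact hnm 0 1 (fun _ => by omega) (fun h => by exact absurd h (by decide))
        (fun h => by exact absurd h (by decide)) (Or.inr (by omega))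
    · exact hnm 1 1 (fun h => by exact absurd h (by decide)) (fun _ => by omega)
        (fun h => by exact absurd h (by decide)) (Or.inr (by omega))
    · exact hnm 2 (a + b + c - 1 - t) (fun h => by exact absurd h (by decide))
        (fun h => by exact absurd h (by decide)) (fun _ => by omega) (Or.inl (by omega))
  · apply triple_X_not_mem_QS
    · exact hnm 0 1 (fun _ => by omega) (fun h => by exact absurd h (by decide))
        (fun h => by exact absurd h (by decide)) (Or.inr (by omega))
    · exact hnm 1 1 (fun h => by exact absurd h (by decide)) (fun _ => by omega)
        (fun h => by exact absurd h (by decide)) (Or.inr (by omega))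
    · exact hnm 2 1 (fun h => by exact absurd h (by decide))
        (fun h => by exact absurd h (by decide)) (fun _ => by omega) (Or.inr (by omega))

end ChainFacts
end Sec6

/-- the Krull dimension of the special fiber ring
`F(I_D) = K[x_i y_j z_k : (i,j,k) ∈ D]` of a three-dimensional Ferrers diagram
equals `a_D + b_D + c_D − 2`. -/
theorem stmt6 {K : Type*} [Field K] (D : Finset Pt) (hD : IsFerrers D)
    (hne : D.Nonempty) :
    ringKrullDim (Algebra.adjoin K
      ((fun v : Pt => (X (0, v.1) * X (1, v.2.1) * X (2, v.2.2) :
        MvPolynomial (Fin 3 × ℕ) K)) '' (↑D : Set Pt))) =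
    (((D.image Prod.fst).card + (D.image fun v => v.2.1).card +
      (D.image fun v => v.2.2).card - 2 : ℕ) : WithBot (WithTop ℕ)) := by
  classical
  have ha := aD_pos hD hne
  have hb := bD_pos hD hne
  have hc := cD_pos hD hne
  set a := aD D with hha
  set b := bD D with hhb
  set c := cD D with hhc
  set d := a + b + c - 2 with hd
  set gset : Set (MvPolynomial (Fin 3 × ℕ) K) :=
    (fun v : Pt => (X (0, v.1) * X (1, v.2.1) * X (2, v.2.2) :
      MvPolynomial (Fin 3 × ℕ) K)) '' (↑D : Set Pt) with hgset
  show ringKrullDim (Algebra.adjoin K gset) = ((d : ℕ) : WithBot (WithTop ℕ))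
  set AA := Algebra.adjoin K gset with hAA
  have hS : ∀ f ∈ gset, f ∈ WB K a b c 1 := by
    rintro f ⟨v, hv, rfl⟩
    have hmem : v ∈ D := hv
    exact gen_mem_WB (hD v hmem).1 (fst_le hD hne hmem) (hD v hmem).2.1
      (snd_le hD hne hmem) (hD v hmem).2.2.1 (trd_le hD hne hmem)
  haveI : Nontrivial ↥AA := nontrivial_of_ne 0 1 (by
    intro h
    have h2 : ((0 : ↥AA) : MvPolynomial (Fin 3 × ℕ) K)
        = ((1 : ↥AA) : MvPolynomial (Fin 3 × ℕ) K) := congrArg Subtype.val h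
    simp only [ZeroMemClass.coe_zero, OneMemClass.coe_one] at h2
    exact zero_ne_one h2)
  -- the chain of primes giving the lower bound
  have hq'aux : ∀ t : ℕ, (Ideal.comap (AA.val) (QS K (SS a b c d t))).IsPrime := by
    intro t
    haveI := QS_isPrime (K := K) (SS a b c d t)
    exact Ideal.IsPrime.comap _
  set q' : ℕ → PrimeSpectrum ↥AA := fun t =>
    ⟨Ideal.comap (AA.val) (QS K (SS a b c d t)), hq'aux t⟩ with hq'
  have hstep : ∀ t : ℕ, 1 ≤ t → t ≤ d → q' (t - 1) < q' t := by
    intro t h1 h2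
    have hle : q' (t - 1) ≤ q' t := Ideal.comap_mono (QS_mono (SS_mono (by omega)))
    have hwD : wit a b c d t ∈ D := wit_mem_D hD hne h1 h2
    set w := wit a b c d t with hw
    set g : MvPolynomial (Fin 3 × ℕ) K := X (0, w.1) * X (1, w.2.1) * X (2, w.2.2) with hgg
    have hgA : g ∈ AA := Algebra.subset_adjoin ⟨w, hwD, rfl⟩
    have hin : (⟨g, hgA⟩ : ↥AA) ∈ (q' t).asIdeal := by
      rw [hq']
      exact Ideal.mem_comap.mpr (genFun_wit_mem ha hb hc hd h1 h2)
    have hout : (⟨g, hgA⟩ : ↥AA) ∉ (q' (t - 1)).asIdeal := by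
      rw [hq']
      intro hmem
      exact genFun_wit_not_mem (K := K) ha hb hc hd h1 h2 (Ideal.mem_comap.mp hmem)
    refine lt_of_le_of_ne hle ?_
    intro hEq
    rw [hEq] at hout
    exact hout hin
  set pLow : LTSeries (PrimeSpectrum ↥AA) :=
    { length := d
      toFun := fun i => q' (i : ℕ)
      step := fun i => by
        have h := hstep ((i : ℕ) + 1) (by omega) (by omega)
        simpa using h } with hpLow
  -- upper bound for all chains
  have hup : ∀ p : LTSeries (PrimeSpectrum ↥AA), p.length ≤ d := by
    intro p
    by_contra hcon
    push_neg at hcon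
    set ℓ := a + b + c - 1 with hℓ
    have hℓle : ℓ ≤ p.length := by omega
    set q : ℕ → Ideal ↥AA := fun t => (p.toFun ⟨min t p.length, by omega⟩).asIdeal with hq
    have hqp : ∀ t, t ≤ ℓ → (q t).IsPrime := fun t _ => (p.toFun _).2
    have hqlt : ∀ t, t < ℓ → q t < q (t + 1) := by
      intro t ht
      apply p.strictMono
      rw [Fin.mk_lt_mk]
      omega
    have hex : ∀ t, t < ℓ → ∃ x : ↥AA, x ∈ q (t + 1) ∧ x ∉ q t :=
      fun t ht => SetLike.exists_of_lt (hqlt t ht)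
    choose! Y hY1 hY0 using hex
    have hY1' : ∀ t, t < ℓ → Y t ∈ q (t + 1) := fun t ht => (hY1 t ht)
    have hY0' : ∀ t, t < ℓ → Y t ∉ q t := fun t ht => (hY0 t ht)
    obtain ⟨Q, hQ0, hQa⟩ := exists_annihilating ha hb hc hS ℓ (by omega)
      (fun i : Fin ℓ => Y (i : ℕ))
    obtain ⟨Al, aa, heq⟩ := annihilator_gives_equation ℓ Y Q hQ0 hQa
    exact cl_descent ℓ q hqp (fun t ht => le_of_lt (hqlt t ht)) Y aa Al hY1' hY0' heq
  -- conclude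
  rw [ringKrullDim]
  apply le_antisymm
  · rw [Order.krullDim_eq_iSup_length]
    have hh : (⨆ (p : LTSeries (PrimeSpectrum ↥AA)), (p.length : ℕ∞)) ≤ (d : ℕ∞) :=
      iSup_le fun p => Nat.cast_le.mpr (hup p)
    exact WithBot.coe_le_coe.mpr hh
  · have hlow := Order.LTSeries.length_le_krullDim pLow
    have hlen : pLow.length = d := rfl
    rw [hlen] at hlow
    exact_mod_cast hlow
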